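/- Let k be a positive integer, 0 < δ ≤ 1 a real number, and d = ⌈1/δ⌉. Let A be a finite multiset of elements of the free group F_k on generators x₁, ..., x_k with |A| ≥ d, such that for every nonempty subset C ⊆ {1,...,k}, the number of elements of A (counted with multiplicity) lying in Σ_C is at most (1 − δ)·|A|. Then there exists a finite nonempty multiset A' of elements of F_k with |A'| = 61·k·2^d such that A' has detection probability at least 1/8 in F_k. -/

import Mathlib

open scoped Classical

/-- `A` has detection probability at least `δ` in `G`. -/
def Detects {G : Type*} [Group G] (A : Multiset G) (δ : ℝ) : Prop :=
  ∀ H : Subgroup G, H ≠ ⊤ →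
    ((A.filter (fun a => a ∈ H)).card : ℝ) ≤ (1 - δ) * (Multiset.card A : ℝ)

noncomputable def wprod {G : Type*} [Monoid G] {d : ℕ} (a : Fin d → G) (S : Finset (Fin d)) : G :=
  (((List.finRange d).filter (fun i => decide (i ∈ S))).map a).prod

lemma wprod_key {G : Type*} [Group G] {d : ℕ} (a : Fin d → G) (H : Subgroup G) (j : Fin d)
    (hj : a j ∉ H) (hgt : ∀ i, j < i → a i ∈ H) (S : Finset (Fin d)) (hjS : j ∉ S)
    (h1 : wprod a S ∈ H) : wprod a (insert j S) ∉ H := by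
  obtain ⟨L₁, L₂, hL⟩ := List.append_of_mem (List.mem_finRange j)
  have hpw := List.pairwise_lt_finRange d
  rw [hL, List.pairwise_append] at hpw
  obtain ⟨hp1, hp2, hcross⟩ := hpw
  rw [List.pairwise_cons] at hp2
  have hL1 : ∀ x ∈ L₁, x ≠ j := fun x hx => ne_of_lt (hcross x hx j List.mem_cons_self)
  have hL2 : ∀ x ∈ L₂, x ≠ j := fun x hx => (ne_of_gt (hp2.1 x hx))
  have hfilt : ∀ (T : Finset (Fin d)), ((L₁.filter (fun i => decide (i ∈ insert j T))) = L₁.filter (fun i => decide (i ∈ T))) := by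
    intro T
    apply List.filter_congr
    intro x hx
    simp [Finset.mem_insert, hL1 x hx]
  have hfilt2 : ((L₂.filter (fun i => decide (i ∈ insert j S))) = L₂.filter (fun i => decide (i ∈ S))) := by
    apply List.filter_congr
    intro x hx
    simp [Finset.mem_insert, hL2 x hx]
  have e1 : wprod a (insert j S) = ((L₁.filter (fun i => decide (i ∈ S))).map a).prod *
      (a j * ((L₂.filter (fun i => decide (i ∈ S))).map a).prod) := by
    unfold wprod
    rw [hL, List.filter_append, List.filter_cons]
    rw [hfilt S, hfilt2]
    have : (decide (j ∈ insert j S)) = true := by simp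
    rw [this]
    simp
  have e2 : wprod a S = ((L₁.filter (fun i => decide (i ∈ S))).map a).prod *
      ((L₂.filter (fun i => decide (i ∈ S))).map a).prod := by
    unfold wprod
    rw [hL, List.filter_append, List.filter_cons]
    have : (decide (j ∈ S)) = false := by simpa using hjS
    rw [this]
    simp
  set P₁ := ((L₁.filter (fun i => decide (i ∈ S))).map a).prod
  set P₂ := ((L₂.filter (fun i => decide (i ∈ S))).map a).prod
  have hP₂ : P₂ ∈ H := by
    apply Subgroup.list_prod_mem
    intro x hx
    simp only [List.mem_map, List.mem_filter] at hx
    obtain ⟨i, ⟨hi, _⟩, rfl⟩ := hx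
    exact hgt i (hp2.1 i hi)
  intro h2
  rw [e2] at h1
  rw [e1] at h2
  have hP₁ : P₁ ∈ H := by
    have := H.mul_mem h1 (H.inv_mem hP₂)
    simpa using this
  have : a j * P₂ ∈ H := by
    have := H.mul_mem (H.inv_mem hP₁) h2
    simpa [mul_assoc] using this
  exact hj (by simpa using H.mul_mem this (H.inv_mem hP₂))

lemma wprod_count {G : Type*} [Group G] {d : ℕ} (a : Fin d → G) (H : Subgroup G)
    (hex : ∃ j, a j ∉ H) :
    2 * (Finset.univ.filter (fun S : Finset (Fin d) => wprod a S ∈ H)).card ≤ 2 ^ d := by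
  classical
  obtain ⟨j0, hj0⟩ := hex
  set B : Finset (Fin d) := Finset.univ.filter (fun i => a i ∉ H) with hB
  have hBne : B.Nonempty := ⟨j0, by simp [hB, hj0]⟩
  set j := B.max' hBne with hjdef
  have hj : a j ∉ H := by
    have h : j ∈ Finset.filter (fun i => a i ∉ H) Finset.univ := B.max'_mem hBne
    exact (Finset.mem_filter.mp h).2
  have hgt : ∀ i, j < i → a i ∈ H := by
    intro i hi
    by_contra hmem
    have : i ∈ B := by simp [hB, hmem]
    exact absurd (Finset.le_max' B i this) (not_le.mpr hi)
  set ι : Finset (Fin d) → Finset (Fin d) := fun S => if j ∈ S then S.erase j else insert j S with hι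
  have hinv : ∀ S, ι (ι S) = S := by
    intro S
    by_cases hjS : j ∈ S
    · simp [hι, hjS, Finset.notMem_erase, Finset.insert_erase hjS]
    · simp [hι, hjS, Finset.erase_insert hjS]
  have hmaps : ∀ S ∈ Finset.univ.filter (fun S : Finset (Fin d) => wprod a S ∈ H),
      ι S ∈ Finset.univ.filter (fun S : Finset (Fin d) => wprod a S ∉ H) := by
    intro S hS
    rw [Finset.mem_filter] at hS ⊢
    refine ⟨Finset.mem_univ _, ?_⟩
    by_cases hjS : j ∈ S
    · simp only [hι, if_pos hjS]
      intro hc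
      have h2 := wprod_key a H j hj hgt (S.erase j) (Finset.notMem_erase _ _) hc
      rw [Finset.insert_erase hjS] at h2
      exact h2 hS.2
    · simp only [hι, if_neg hjS]
      exact wprod_key a H j hj hgt S hjS hS.2
  have hinj : Set.InjOn ι (Finset.univ.filter (fun S : Finset (Fin d) => wprod a S ∈ H)) := by
    intro x _ y _ hxy
    have := congrArg ι hxy
    rwa [hinv, hinv] at this
  have hle := Finset.card_le_card_of_injOn ι hmaps hinj
  have hsum := Finset.card_filter_add_card_filter_not
    (s := (Finset.univ : Finset (Finset (Fin d)))) (fun S => wprod a S ∈ H)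
  have huniv : (Finset.univ : Finset (Finset (Fin d))).card = 2 ^ d := by
    rw [Finset.card_univ, Fintype.card_finset, Fintype.card_fin]
  omega

lemma my_filter_sum {α β : Type*} (p : α → Prop) [DecidablePred p] (s : Finset β)
    (f : β → Multiset α) :
    Multiset.filter p (∑ b ∈ s, f b) = ∑ b ∈ s, Multiset.filter p (f b) := by
  induction s using Finset.cons_induction with
  | empty => simp
  | cons b s hb ih => rw [Finset.sum_cons, Finset.sum_cons, Multiset.filter_add, ih]

lemma my_card_sum {α β : Type*} (s : Finset β) (f : β → Multiset α) :
    Multiset.card (∑ b ∈ s, f b) = ∑ b ∈ s, Multiset.card (f b) := by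
  induction s using Finset.cons_induction with
  | empty => simp
  | cons b s hb ih => rw [Finset.sum_cons, Finset.sum_cons, Multiset.card_add, ih]

lemma my_choose_le (n r : ℕ) : n.choose r ≤ 2 ^ n := by
  rcases le_or_gt r n with h | h
  · calc n.choose r ≤ ∑ m ∈ Finset.range (n+1), n.choose m :=
        Finset.single_le_sum (fun i _ => Nat.zero_le _) (Finset.mem_range.mpr (by omega))
      _ = 2 ^ n := Nat.sum_range_choose n
  · rw [Nat.choose_eq_zero_of_lt h]; exact Nat.zero_le _

lemma card_threshold {σ : Type*} [Fintype σ] (n r : ℕ) (Bad : Finset σ)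
    [∀ (F : Fin n → σ) (b : Fin n), Decidable (F b ∈ Bad)] :
    (Finset.univ.filter (fun F : Fin n → σ =>
        r ≤ (Finset.univ.filter (fun b => F b ∈ Bad)).card)).card
      ≤ n.choose r * Bad.card ^ r * (Fintype.card σ) ^ (n - r) := by
  classical
  set 𝒮 := Finset.powersetCard r (Finset.univ : Finset (Fin n)) with h𝒮
  have hsub : (Finset.univ.filter (fun F : Fin n → σ =>
      r ≤ (Finset.univ.filter (fun b => F b ∈ Bad)).card))
      ⊆ 𝒮.biUnion (fun s => Fintype.piFinset (fun b => if b ∈ s then Bad else Finset.univ)) := by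
    intro F hF
    rw [Finset.mem_filter] at hF
    obtain ⟨s, hs, hscard⟩ := Finset.exists_subset_card_eq hF.2
    rw [Finset.mem_biUnion]
    refine ⟨s, ?_, ?_⟩
    · rw [h𝒮, Finset.mem_powersetCard]
      exact ⟨Finset.subset_univ _, hscard⟩
    · rw [Fintype.mem_piFinset]
      intro b
      by_cases hb : b ∈ s
      · rw [if_pos hb]
        exact (Finset.mem_filter.mp (hs hb)).2
      · rw [if_neg hb]; exact Finset.mem_univ _
  calc _ ≤ (𝒮.biUnion _).card := Finset.card_le_card hsub
    _ ≤ ∑ s ∈ 𝒮, (Fintype.piFinset (fun b => if b ∈ s then Bad else Finset.univ)).card :=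
        Finset.card_biUnion_le
    _ ≤ ∑ _s ∈ 𝒮, Bad.card ^ r * (Fintype.card σ) ^ (n - r) := by
        apply Finset.sum_le_sum
        intro s hs
        rw [h𝒮, Finset.mem_powersetCard] at hs
        rw [Fintype.card_piFinset]
        have : ∀ b : Fin n, ((if b ∈ s then Bad else Finset.univ).card)
            = (if b ∈ s then Bad.card else Fintype.card σ) := by
          intro b; by_cases hb : b ∈ s <;> simp [hb]
        rw [Finset.prod_congr rfl (fun b _ => this b)]
        rw [Finset.prod_ite (fun _ => Bad.card) (fun _ => Fintype.card σ),
          Finset.prod_const, Finset.prod_const]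
        have h1 : Finset.filter (fun b => b ∈ s) Finset.univ = s := Finset.filter_univ_mem s
        have h2 : (Finset.filter (fun b => ¬ b ∈ s) Finset.univ).card = n - s.card := by
          rw [← Finset.compl_filter, Finset.card_compl, h1, Fintype.card_fin]
        rw [h1, h2, hs.2]
    _ = n.choose r * Bad.card ^ r * (Fintype.card σ) ^ (n - r) := by
        rw [Finset.sum_const, h𝒮, Finset.card_powersetCard, Finset.card_univ, Fintype.card_fin,
          smul_eq_mul, mul_assoc]

set_option maxHeartbeats 2000000 in
theorem stmt6 (k : ℕ) (hk : 0 < k) (δ : ℝ) (hδ0 : 0 < δ) (hδ1 : δ ≤ 1)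
    (d : ℕ) (hd : d = ⌈1 / δ⌉₊)
    (A : Multiset (FreeGroup (Fin k))) (hA : d ≤ Multiset.card A)
    (hsynd : ∀ C : Finset (Fin k), C.Nonempty →
      ((A.filter (fun w => ∃ H : Subgroup (FreeGroup (Fin k)),
          (∀ i : Fin k, FreeGroup.of i ∉ H ↔ i ∈ C) ∧ w ∈ H)).card : ℝ)
        ≤ (1 - δ) * (Multiset.card A : ℝ)) :
    ∃ A' : Multiset (FreeGroup (Fin k)), A' ≠ 0 ∧
      Multiset.card A' = 61 * k * 2 ^ d ∧ Detects A' (1 / 8) := by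
  classical
  set P : Finset (Fin k) → FreeGroup (Fin k) → Prop :=
    fun C w => ∃ H : Subgroup (FreeGroup (Fin k)),
      (∀ i : Fin k, FreeGroup.of i ∉ H ↔ i ∈ C) ∧ w ∈ H with hP
  -- basic numerology
  have hd1 : 1 ≤ d := by
    rw [hd]
    have : (1:ℝ) ≤ 1/δ := by
      rw [le_div_iff₀ hδ0]; linarith
    calc 1 = ⌈(1:ℝ)⌉₊ := by simp
      _ ≤ ⌈1/δ⌉₊ := Nat.ceil_le_ceil this
  have hδd : 1 ≤ δ * d := by
    have h1 : (1:ℝ)/δ ≤ (d:ℝ) := by rw [hd]; exact Nat.le_ceil _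
    calc (1:ℝ) = δ * (1/δ) := by field_simp
      _ ≤ δ * d := by apply mul_le_mul_of_nonneg_left h1 (le_of_lt hδ0)
  set t := Multiset.card A with ht
  have ht1 : 1 ≤ t := le_trans hd1 hA
  -- index type
  have hcardI : Fintype.card {x // x ∈ A.toEnumFinset} = t := by
    rw [Fintype.card_coe, Multiset.card_toEnumFinset]
  set BadIdx : Finset (Fin k) → Finset {x // x ∈ A.toEnumFinset} :=
    fun C => Finset.univ.filter (fun x => P C (x : (FreeGroup (Fin k)) × ℕ).1)
    with hBadIdx
  -- card of BadIdx
  have hbc : ∀ C : Finset (Fin k), C.Nonempty → ((BadIdx C).card : ℝ) ≤ (1 - δ) * t := by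
    intro C hC
    have e1 : (BadIdx C).card = (A.toEnumFinset.filter (fun y => P C y.1)).card := by
      show (Finset.filter (fun x : {x // x ∈ A.toEnumFinset} => P C (x : (FreeGroup (Fin k)) × ℕ).1) A.toEnumFinset.attach).card = _
      rw [Finset.filter_attach (fun y => P C y.1) A.toEnumFinset, Finset.card_map,
        Finset.card_attach]
    have e2 : (A.toEnumFinset.filter (fun y => P C y.1)).card
        = Multiset.card (A.filter (P C)) := by
      conv_rhs => rw [← Multiset.map_toEnumFinset_fst A]
      rw [Multiset.filter_map]
      rw [Multiset.card_map]
      rfl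
    rw [e1, e2]
    exact hsynd C hC
  -- parameters
  set n := 61 * k with hn
  set r := 183 * k / 4 + 1 with hr
  have hrn : r ≤ n := by omega
  -- sequence space
  have hcardσ : Fintype.card (Fin d → {x // x ∈ A.toEnumFinset}) = t ^ d := by
    rw [Fintype.card_fun, Fintype.card_fin, hcardI]
  set BadSeq : Finset (Fin k) → Finset (Fin d → {x // x ∈ A.toEnumFinset}) :=
    fun C => Fintype.piFinset (fun _ => BadIdx C)
    with hBadSeq
  have hcardBadSeq : ∀ C, (BadSeq C).card = (BadIdx C).card ^ d := by
    intro C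
    rw [hBadSeq, Fintype.card_piFinset]
    simp
  set 𝒞 : Finset (Finset (Fin k)) := Finset.univ.filter (fun C => C.Nonempty) with h𝒞
  have hcard𝒞 : (𝒞.card : ℝ) ≤ 2 ^ k := by
    calc (𝒞.card : ℝ) ≤ ((Finset.univ : Finset (Finset (Fin k))).card : ℝ) := by
          exact_mod_cast Finset.card_filter_le _ _
      _ = 2 ^ k := by rw [Finset.card_univ, Fintype.card_finset, Fintype.card_fin]; push_cast; ring
  set E : Finset (Fin k) → Finset (Fin n → (Fin d → {x // x ∈ A.toEnumFinset})) := fun C =>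
    Finset.univ.filter (fun F => r ≤ (Finset.univ.filter (fun b => F b ∈ BadSeq C)).card)
    with hE
  -- per-C real bound
  have hEbound : ∀ C ∈ 𝒞, ((E C).card : ℝ) ≤ 2 ^ n * Real.exp (-(r:ℝ)) * (t:ℝ) ^ (d * n) := by
    intro C hC
    rw [h𝒞, Finset.mem_filter] at hC
    have h1 : (E C).card ≤ n.choose r * (BadSeq C).card ^ r * (Fintype.card (Fin d → {x // x ∈ A.toEnumFinset})) ^ (n - r) := by
      have hEeq : E C = Finset.univ.filter
          (fun F => r ≤ (Finset.univ.filter (fun b => F b ∈ BadSeq C)).card) := by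
        rw [hE]
      rw [hEeq]
      exact card_threshold n r (BadSeq C)
    have h2 : ((E C).card : ℝ)
        ≤ (n.choose r : ℝ) * ((BadIdx C).card : ℝ) ^ (d * r) * (t:ℝ) ^ (d * (n - r)) := by
      calc ((E C).card : ℝ) ≤ (n.choose r : ℝ) * ((BadSeq C).card : ℝ) ^ r
            * ((Fintype.card (Fin d → {x // x ∈ A.toEnumFinset}) : ℝ)) ^ (n - r) := by exact_mod_cast h1
        _ = (n.choose r : ℝ) * ((BadIdx C).card : ℝ) ^ (d * r) * (t:ℝ) ^ (d * (n - r)) := by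
            rw [hcardBadSeq, hcardσ]
            push_cast
            rw [← pow_mul, ← pow_mul]
    have hb0 : (0:ℝ) ≤ ((BadIdx C).card : ℝ) := Nat.cast_nonneg _
    have hb1 : ((BadIdx C).card : ℝ) ≤ (1 - δ) * t := hbc C hC.2
    have ht0 : (0:ℝ) ≤ (t:ℝ) := Nat.cast_nonneg _
    have hδ1' : (0:ℝ) ≤ 1 - δ := by
      by_contra hcon
      push_neg at hcon
      nlinarith [hb0, hb1, ht0, hb1]
    have h3 : ((BadIdx C).card : ℝ) ^ (d * r) ≤ ((1 - δ) * t) ^ (d * r) :=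
      pow_le_pow_left₀ hb0 hb1 _
    have h4 : ((1 - δ) * (t:ℝ)) ^ (d * r) = ((1-δ) ^ d) ^ r * (t:ℝ) ^ (d * r) := by
      rw [mul_pow, ← pow_mul]
    have h5 : (1 - δ) ^ d ≤ Real.exp (-1) := by
      have e1 : 1 - δ ≤ Real.exp (-δ) := by
        have := Real.add_one_le_exp (-δ)
        linarith
      calc (1 - δ) ^ d ≤ (Real.exp (-δ)) ^ d := pow_le_pow_left₀ hδ1' e1 d
        _ = Real.exp (-δ * d) := by rw [← Real.exp_nat_mul]; ring_nf
        _ ≤ Real.exp (-1) := by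
            apply Real.exp_le_exp.mpr
            nlinarith
    have h6 : ((1-δ) ^ d) ^ r ≤ (Real.exp (-1)) ^ r := by
      apply pow_le_pow_left₀ (pow_nonneg hδ1' d) h5
    have h7 : (Real.exp (-1)) ^ r = Real.exp (-(r:ℝ)) := by
      rw [← Real.exp_nat_mul]; ring_nf
    have h8 : ((n.choose r : ℕ) : ℝ) ≤ 2 ^ n := by
      exact_mod_cast my_choose_le n r
    have htpow : (t:ℝ) ^ (d * r) * (t:ℝ) ^ (d * (n - r)) = (t:ℝ) ^ (d * n) := by
      rw [← pow_add]
      congr 1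
      have : d * r + d * (n - r) = d * (r + (n - r)) := by ring
      rw [this, Nat.add_sub_cancel' hrn]
    calc ((E C).card : ℝ)
        ≤ (n.choose r : ℝ) * ((BadIdx C).card : ℝ) ^ (d * r) * (t:ℝ) ^ (d * (n - r)) := h2
      _ ≤ (2:ℝ) ^ n * (Real.exp (-(r:ℝ)) * (t:ℝ) ^ (d * r)) * (t:ℝ) ^ (d * (n - r)) := by
          apply mul_le_mul _ le_rfl (by positivity) (by positivity)
          apply mul_le_mul h8 _ (pow_nonneg hb0 _) (by positivity)
          calc ((BadIdx C).card : ℝ) ^ (d * r) ≤ ((1 - δ) * t) ^ (d * r) := h3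
            _ = ((1-δ) ^ d) ^ r * (t:ℝ) ^ (d * r) := h4
            _ ≤ (Real.exp (-1)) ^ r * (t:ℝ) ^ (d * r) := by
                apply mul_le_mul_of_nonneg_right h6 (by positivity)
            _ = Real.exp (-(r:ℝ)) * (t:ℝ) ^ (d * r) := by rw [h7]
      _ = 2 ^ n * Real.exp (-(r:ℝ)) * (t:ℝ) ^ (d * n) := by
          rw [mul_assoc, mul_assoc, mul_assoc, htpow]
  -- total bound and existence of good family
  have hkey : ((𝒞.biUnion E).card : ℝ) < ((Finset.univ : Finset (Fin n → (Fin d → {x // x ∈ A.toEnumFinset}))).card : ℝ) := by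
    have h1 : ((𝒞.biUnion E).card : ℝ) ≤ ∑ C ∈ 𝒞, ((E C).card : ℝ) := by
      exact_mod_cast Finset.card_biUnion_le
    have h2 : ∑ C ∈ 𝒞, ((E C).card : ℝ) ≤ 𝒞.card * (2 ^ n * Real.exp (-(r:ℝ)) * (t:ℝ) ^ (d * n)) := by
      calc ∑ C ∈ 𝒞, ((E C).card : ℝ) ≤ ∑ _C ∈ 𝒞, (2 ^ n * Real.exp (-(r:ℝ)) * (t:ℝ) ^ (d * n)) :=
            Finset.sum_le_sum hEbound
        _ = 𝒞.card * (2 ^ n * Real.exp (-(r:ℝ)) * (t:ℝ) ^ (d * n)) := by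
            rw [Finset.sum_const, nsmul_eq_mul]
    have huniv : ((Finset.univ : Finset (Fin n → (Fin d → {x // x ∈ A.toEnumFinset}))).card : ℝ) = (t : ℝ) ^ (d * n) := by
      rw [Finset.card_univ, Fintype.card_fun, hcardσ, Fintype.card_fin]
      push_cast
      rw [← pow_mul]
    rw [huniv]
    have hsmall : (𝒞.card : ℝ) * (2 ^ n * Real.exp (-(r:ℝ))) < 1 := by
      have hle : (𝒞.card : ℝ) * (2 ^ n * Real.exp (-(r:ℝ)))
          ≤ 2 ^ (62 * k) * Real.exp (-(r:ℝ)) := by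
        have : (2:ℝ) ^ k * 2 ^ n = 2 ^ (62 * k) := by
          rw [← pow_add, hn]; ring_nf
        calc (𝒞.card : ℝ) * (2 ^ n * Real.exp (-(r:ℝ)))
            ≤ 2 ^ k * (2 ^ n * Real.exp (-(r:ℝ))) := by
              apply mul_le_mul_of_nonneg_right hcard𝒞 (by positivity)
          _ = 2 ^ (62 * k) * Real.exp (-(r:ℝ)) := by rw [← mul_assoc, this]
      have hexp : (2:ℝ) ^ (62 * k) < Real.exp (r:ℝ) := by
        have e1 : (2:ℝ) ^ (62 * k) = Real.exp ((62 * k : ℕ) * Real.log 2) := by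
          rw [Real.exp_nat_mul, Real.exp_log (by norm_num : (0:ℝ) < 2)]
        rw [e1]
        apply Real.exp_lt_exp.mpr
        have hlog : Real.log 2 < 0.6931471808 := Real.log_two_lt_d9
        have hlog0 : 0 ≤ Real.log 2 := Real.log_nonneg (by norm_num)
        have hrreal : (183 * k : ℝ) / 4 < (r : ℝ) := by
          rw [hr]
          have : 183 * k < 4 * (183 * k / 4 + 1) := by omega
          push_cast
          have : (183 * (k:ℝ)) < 4 * ((183 * k / 4 : ℕ) + 1) := by exact_mod_cast this
          linarith
        have hk1 : (1:ℝ) ≤ (k:ℝ) := by exact_mod_cast hk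
        calc ((62 * k : ℕ) : ℝ) * Real.log 2 = 62 * (k:ℝ) * Real.log 2 := by push_cast; ring
          _ ≤ 62 * (k:ℝ) * 0.6931471808 := by
              apply mul_le_mul_of_nonneg_left (le_of_lt hlog) (by positivity)
          _ < (183 * k : ℝ) / 4 := by nlinarith
          _ < (r : ℝ) := hrreal
      calc (𝒞.card : ℝ) * (2 ^ n * Real.exp (-(r:ℝ)))
          ≤ 2 ^ (62 * k) * Real.exp (-(r:ℝ)) := hle
        _ < Real.exp (r:ℝ) * Real.exp (-(r:ℝ)) := by
            apply mul_lt_mul_of_pos_right hexp (Real.exp_pos _)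
        _ = 1 := by rw [← Real.exp_add]; ring_nf; exact Real.exp_zero
    have htpos : (0:ℝ) < (t:ℝ) ^ (d * n) := by
      apply pow_pos
      exact_mod_cast ht1
    calc ((𝒞.biUnion E).card : ℝ) ≤ ∑ C ∈ 𝒞, ((E C).card : ℝ) := h1
      _ ≤ 𝒞.card * (2 ^ n * Real.exp (-(r:ℝ)) * (t:ℝ) ^ (d * n)) := h2
      _ = (𝒞.card * (2 ^ n * Real.exp (-(r:ℝ)))) * (t:ℝ) ^ (d * n) := by ring
      _ < 1 * (t:ℝ) ^ (d * n) := by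
          apply mul_lt_mul_of_pos_right hsmall htpos
      _ = (t:ℝ) ^ (d * n) := by ring
  have hFex : ∃ F : Fin n → (Fin d → {x // x ∈ A.toEnumFinset}), ∀ C ∈ 𝒞, F ∉ E C := by
    by_contra hcon
    push_neg at hcon
    have hsub : (Finset.univ : Finset (Fin n → (Fin d → {x // x ∈ A.toEnumFinset}))) ⊆ 𝒞.biUnion E := by
      intro F _
      obtain ⟨C, hC, hCE⟩ := hcon F
      exact Finset.mem_biUnion.mpr ⟨C, hC, hCE⟩
    have := Finset.card_le_card hsub
    have : ((Finset.univ : Finset (Fin n → (Fin d → {x // x ∈ A.toEnumFinset}))).card : ℝ) ≤ ((𝒞.biUnion E).card : ℝ) := by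
      exact_mod_cast this
    linarith
  obtain ⟨F, hF⟩ := hFex
  -- construct A'
  set a : Fin n → Fin d → FreeGroup (Fin k) := fun b j => ((F b j) : (FreeGroup (Fin k)) × ℕ).1 with ha
  set M : Fin n → Multiset (FreeGroup (Fin k)) := fun b =>
    Multiset.map (wprod (a b)) (Finset.univ : Finset (Finset (Fin d))).val with hM
  have hcardM : ∀ b, Multiset.card (M b) = 2 ^ d := by
    intro b
    rw [hM]
    simp only [Multiset.card_map]
    have : Multiset.card (Finset.univ : Finset (Finset (Fin d))).val
        = (Finset.univ : Finset (Finset (Fin d))).card := rfl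
    rw [this, Finset.card_univ, Fintype.card_finset, Fintype.card_fin]
  set A' : Multiset (FreeGroup (Fin k)) := ∑ b : Fin n, M b with hA'
  have hcardA' : Multiset.card A' = 61 * k * 2 ^ d := by
    rw [hA', my_card_sum]
    rw [Finset.sum_congr rfl (fun b _ => hcardM b)]
    rw [Finset.sum_const, Finset.card_univ, Fintype.card_fin, smul_eq_mul, hn]
  refine ⟨A', ?_, hcardA', ?_⟩
  · rw [← Multiset.card_pos, hcardA']
    positivity
  · intro H hH
    -- syndrome of H
    set C : Finset (Fin k) := Finset.univ.filter (fun i => FreeGroup.of i ∉ H) with hC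
    have hCsynd : ∀ i : Fin k, FreeGroup.of i ∉ H ↔ i ∈ C := by
      intro i
      rw [hC, Finset.mem_filter]
      simp
    have hCne : C.Nonempty := by
      by_contra hcon
      rw [Finset.not_nonempty_iff_eq_empty] at hcon
      apply hH
      rw [eq_top_iff]
      intro w hw
      clear hw
      induction w using FreeGroup.induction_on with
      | C1 => exact H.one_mem
      | of x =>
          by_contra hx
          have : x ∈ C := (hCsynd x).mp hx
          rw [hcon] at this
          exact absurd this (Finset.notMem_empty x)
      | inv_of x hx => exact H.inv_mem hx
      | mul x y hx hy => exact H.mul_mem hx hy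
    have hC𝒞 : C ∈ 𝒞 := by
      rw [h𝒞, Finset.mem_filter]
      exact ⟨Finset.mem_univ _, hCne⟩
    -- membership in H implies P C
    have hHP : ∀ w : FreeGroup (Fin k), w ∈ H → P C w := fun w hw => ⟨H, hCsynd, hw⟩
    -- bad block count
    set bb := (Finset.univ.filter (fun b => F b ∈ BadSeq C)).card with hbb
    have hbbr : 4 * bb ≤ 183 * k := by
      have := hF C hC𝒞
      rw [hE, Finset.mem_filter] at this
      push_neg at this
      have h2 := this (Finset.mem_univ F)
      rw [← hbb] at h2
      omega
    -- per block counts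
    have hcnt : ∀ b : Fin n, 2 * Multiset.card (Multiset.filter (fun w => w ∈ H) (M b))
        ≤ (if F b ∈ BadSeq C then 2 * 2 ^ d else 2 ^ d) := by
      intro b
      by_cases hbad : F b ∈ BadSeq C
      · rw [if_pos hbad]
        have : Multiset.card (Multiset.filter (fun w => w ∈ H) (M b))
            ≤ Multiset.card (M b) := Multiset.card_le_card (Multiset.filter_le _ _)
        rw [hcardM b] at this
        omega
      · rw [if_neg hbad]
        have hex : ∃ j, a b j ∉ H := by
          rw [hBadSeq, Fintype.mem_piFinset] at hbad
          push_neg at hbad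
          obtain ⟨j, hj⟩ := hbad
          refine ⟨j, ?_⟩
          intro hmem
          apply hj
          rw [hBadIdx, Finset.mem_filter]
          exact ⟨Finset.mem_univ _, hHP _ hmem⟩
        have hw := wprod_count (a b) H hex
        have e1 : Multiset.card (Multiset.filter (fun w => w ∈ H) (M b))
            = (Finset.univ.filter (fun S : Finset (Fin d) => wprod (a b) S ∈ H)).card := by
          rw [hM]
          rw [Multiset.filter_map, Multiset.card_map]
          rfl
        rw [e1]
        exact hw
    -- total count
    have htotal : 2 * Multiset.card (Multiset.filter (fun w => w ∈ H) A')
        ≤ (61 * k + bb) * 2 ^ d := by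
      rw [hA', my_filter_sum, my_card_sum]
      have h1 : 2 * ∑ b : Fin n, Multiset.card (Multiset.filter (fun w => w ∈ H) (M b))
          = ∑ b : Fin n, 2 * Multiset.card (Multiset.filter (fun w => w ∈ H) (M b)) := by
        rw [Finset.mul_sum]
      rw [h1]
      calc ∑ b : Fin n, 2 * Multiset.card (Multiset.filter (fun w => w ∈ H) (M b))
          ≤ ∑ b : Fin n, (if F b ∈ BadSeq C then 2 * 2 ^ d else 2 ^ d) :=
            Finset.sum_le_sum (fun b _ => hcnt b)
        _ = bb * (2 * 2 ^ d) + (n - bb) * 2 ^ d := by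
            rw [Finset.sum_ite (fun _ => 2 * 2 ^ d) (fun _ => 2 ^ d),
              Finset.sum_const, Finset.sum_const, ← hbb]
            have : (Finset.filter (fun b => ¬ F b ∈ BadSeq C) Finset.univ).card = n - bb := by
              rw [← Finset.compl_filter, Finset.card_compl, Fintype.card_fin, hbb]
            rw [this, smul_eq_mul, smul_eq_mul]
        _ ≤ (61 * k + bb) * 2 ^ d := by
            have hbbn : bb ≤ n := by
              rw [hbb]
              calc (Finset.univ.filter (fun b => F b ∈ BadSeq C)).card
                  ≤ (Finset.univ : Finset (Fin n)).card := Finset.card_filter_le _ _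
                _ = n := by rw [Finset.card_univ, Fintype.card_fin]
            have : bb * (2 * 2 ^ d) + (n - bb) * 2 ^ d = (n + bb) * 2 ^ d := by
              have h2 : bb * (2 * 2 ^ d) = 2 * bb * 2 ^ d := by ring
              rw [h2]
              rw [← Nat.add_mul]
              congr 1
              omega
            rw [this, hn]
    -- conclude
    rw [hcardA']
    have hcast : (Multiset.card (Multiset.filter (fun w => w ∈ H) A') : ℝ)
        ≤ ((61 * k + bb : ℕ) : ℝ) * 2 ^ d / 2 := by
      have := htotal
      have h2 : (2 * Multiset.card (Multiset.filter (fun w => w ∈ H) A') : ℝ)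
          ≤ ((61 * k + bb : ℕ) : ℝ) * 2 ^ d := by
        exact_mod_cast this
      push_cast at h2 ⊢
      linarith
    have hbbcast : (bb : ℝ) ≤ 183 * k / 4 := by
      have : (4 * bb : ℝ) ≤ 183 * k := by exact_mod_cast hbbr
      linarith
    calc ((A'.filter (fun w => w ∈ H)).card : ℝ)
        ≤ ((61 * k + bb : ℕ) : ℝ) * 2 ^ d / 2 := hcast
      _ ≤ (1 - 1/8) * ((61 * k * 2 ^ d : ℕ) : ℝ) := by
          push_cast
          have h2d : (0:ℝ) < 2 ^ d := by positivity
          nlinarith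
      _ = (1 - 1/8) * ((61 * k * 2 ^ d : ℕ) : ℝ) := rfl
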